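/- arXiv:0907.0116 — 2 statements merged into one kernel-verified Lean document; each statement's English description precedes it below -/
import Mathlib

section
/- Let f_a(z) = λ·a·(e^{z/a}(z+1-a) - 1 + a) with a ∈ ℂ*, and let v_a = λ·a·(a-1). Then the equation f_a(z) = v_a has exactly one solution in ℂ, namely z = a - 1. -/
open Complex

/-- The asymptotic value `v_a = λ·a·(a-1)` of `f_a` has exactly one finite preimage,
namely `z = a - 1`. -/
theorem asymptotic_value_unique_preimage (a lam : ℂ) (ha : a ≠ 0) (hlam : lam ≠ 0) :
    {z : ℂ | lam * a * (Complex.exp (z / a) * (z + 1 - a) - 1 + a) = lam * a * (a - 1)}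
      = {a - 1} := by
  ext z
  simp only [Set.mem_setOf_eq, Set.mem_singleton_iff]
  constructor
  · intro h
    have hla : lam * a ≠ 0 := mul_ne_zero hlam ha
    have h2 : Complex.exp (z / a) * (z + 1 - a) = 0 := by
      have := mul_left_cancel₀ hla h
      linear_combination this
    rcases mul_eq_zero.1 h2 with h3 | h3
    · exact absurd h3 (Complex.exp_ne_zero _)
    · linear_combination h3
  · rintro rfl
    ring_nf
end

section
/- Let f : ℂ → ℂ be entire with f(0) = 0, and suppose f is injective on the open disc D(0, R') for some R' > 0. Suppose f depends on a parameter a holomorphically and continuously in a, with f = f_{a₀}. Then there exist R > 0 and ε > 0 such that for all a with |a - a₀| < ε, f_a is injective on D(0, R). (Hurwitz-type stability of univalence under perturbation.) -/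
open Metric Filter Topology

/-- An entire-type function injective on a disc around `0` with `f 0 = 0`
has nonzero derivative at `0`. -/
lemma deriv_ne_zero_of_injOn_aux (f : ℂ → ℂ) (hfA : ∀ z, AnalyticAt ℂ f z)
    (h0 : f 0 = 0) (R' : ℝ) (hR' : 0 < R')
    (hinj : Set.InjOn f (ball 0 R')) : deriv f 0 ≠ 0 := by
  intro hderiv0
  have hA : AnalyticAt ℂ f 0 := hfA 0
  -- the order of `f` at 0 is finite
  have hfin : analyticOrderAt f 0 ≠ ⊤ := by
    intro htop
    have hev : ∀ᶠ z in 𝓝 (0 : ℂ), f z = 0 := analyticOrderAt_eq_top.mp htop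
    have hball : ∀ᶠ z in 𝓝 (0 : ℂ), z ∈ ball (0 : ℂ) R' := ball_mem_nhds 0 hR'
    have h1 : ∀ᶠ z in 𝓝[≠] (0 : ℂ), f z = 0 ∧ z ∈ ball (0 : ℂ) R' :=
      (hev.and hball).filter_mono nhdsWithin_le_nhds
    have h2 : ∀ᶠ z in 𝓝[≠] (0 : ℂ), z ≠ 0 := self_mem_nhdsWithin
    obtain ⟨z, ⟨hz0, hzball⟩, hzne⟩ := (h1.and h2).exists
    exact hzne (hinj hzball (mem_ball_self hR') (by rw [hz0, h0]))
  set n : ℕ := (analyticOrderAt f 0).toNat with hn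
  have horder : analyticOrderAt f 0 = (n : ℕ∞) := (ENat.coe_toNat hfin).symm
  obtain ⟨g, hg, hg0, hfac⟩ := hA.analyticOrderAt_eq_natCast.mp horder
  have hfac' : ∀ᶠ z in 𝓝 (0 : ℂ), f z = z ^ n * g z := by
    filter_upwards [hfac] with z hz
    simpa using hz
  -- n ≠ 0
  have hn0 : n ≠ 0 := by
    intro h
    have := hfac'.self_of_nhds
    rw [h, pow_zero, one_mul, h0] at this
    exact hg0 this.symm
  -- n ≠ 1
  have hn1 : n ≠ 1 := by
    intro h
    have hdg : HasDerivAt (fun z : ℂ => z * g z) (1 * g 0 + 0 * deriv g 0) 0 :=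
      (hasDerivAt_id 0).mul (hg.differentiableAt.hasDerivAt)
    have heq : deriv f 0 = deriv (fun z : ℂ => z * g z) 0 := by
      apply Filter.EventuallyEq.deriv_eq
      filter_upwards [hfac'] with z hz
      rw [hz, h, pow_one]
    rw [heq, hdg.deriv] at hderiv0
    simp at hderiv0
    exact hg0 hderiv0
  have hn2 : 2 ≤ n := by omega
  have hnC : (n : ℂ) ≠ 0 := Nat.cast_ne_zero.mpr hn0
  -- construct the n-th root h z = z * e z with e 0 = c₀, c₀ ^ n = g 0
  set c₀ : ℂ := Complex.exp (Complex.log (g 0) / n) with hc₀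
  have hc₀n : c₀ ^ n = g 0 := by
    rw [hc₀, ← Complex.exp_nat_mul, mul_div_cancel₀ _ hnC, Complex.exp_log hg0]
  have hc₀0 : c₀ ≠ 0 := Complex.exp_ne_zero _
  set e : ℂ → ℂ := fun z => c₀ * Complex.exp (Complex.log (g z / g 0) / n) with he
  have he0 : e 0 = c₀ := by
    simp [he, div_self hg0, Complex.log_one]
  have heA : AnalyticAt ℂ e 0 := by
    apply analyticAt_const.mul
    apply AnalyticAt.cexp
    apply AnalyticAt.div _ analyticAt_const hnC
    apply AnalyticAt.clog (hg.div analyticAt_const hg0)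
    simp [div_self hg0, Complex.one_mem_slitPlane]
  set h : ℂ → ℂ := fun z => z * e z with hhdef
  have hhA : AnalyticAt ℂ h 0 := by
    exact (analyticAt_id (𝕜 := ℂ) (E := ℂ)).mul heA
  have hh0 : h 0 = 0 := by simp [hhdef]
  have hhd : HasDerivAt h (1 * e 0 + 0 * deriv e 0) 0 :=
    (hasDerivAt_id 0).mul (heA.differentiableAt.hasDerivAt)
  have hhderiv : deriv h 0 = c₀ := by
    rw [hhd.deriv]; simp [he0]
  have hstrict : HasStrictDerivAt h (deriv h 0) 0 := by
    have := hhA.hasStrictFDerivAt.hasStrictDerivAt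
    rwa [fderiv_apply_one_eq_deriv] at this
  rw [hhderiv] at hstrict
  have hmap : Filter.map h (𝓝 0) = 𝓝 (h 0) := hstrict.map_nhds_eq hc₀0
  rw [hh0] at hmap
  -- choose a radius ρ on which the factorization and nonvanishing of g hold
  have hev : ∀ᶠ z in 𝓝 (0 : ℂ), f z = z ^ n * g z ∧ g z ≠ 0 ∧ z ∈ ball (0 : ℂ) R' := by
    filter_upwards [hfac', hg.continuousAt.eventually_ne hg0, ball_mem_nhds (0:ℂ) hR']
      with z h1 h2 h3
    exact ⟨h1, h2, h3⟩
  obtain ⟨ρ, hρ0, hρ⟩ := Metric.eventually_nhds_iff_ball.mp hev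
  -- on ball 0 ρ, f z = (h z) ^ n
  have hpow : ∀ z ∈ ball (0:ℂ) ρ, f z = (h z) ^ n := by
    intro z hz
    obtain ⟨h1, h2, _⟩ := hρ z hz
    have hgz : g z / g 0 ≠ 0 := div_ne_zero h2 hg0
    have : (e z) ^ n = g z := by
      rw [he, mul_pow, hc₀n, ← Complex.exp_nat_mul, mul_div_cancel₀ _ hnC,
        Complex.exp_log hgz, mul_div_cancel₀ _ hg0]
    rw [h1, hhdef]
    simp [mul_pow, this]
  -- image of ball 0 ρ under h is a neighborhood of 0
  have himg : h '' ball (0:ℂ) ρ ∈ 𝓝 (0:ℂ) := by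
    rw [← hmap]
    exact Filter.image_mem_map (ball_mem_nhds 0 hρ0)
  obtain ⟨δ, hδ0, hδ⟩ := Metric.mem_nhds_iff.mp himg
  -- the root of unity
  set ζ : ℂ := Complex.exp ((2 * Real.pi / n : ℝ) * Complex.I) with hζ
  have hζn : ζ ^ n = 1 := by
    rw [hζ, ← Complex.exp_nat_mul]
    have : (n : ℂ) * ((2 * Real.pi / n : ℝ) * Complex.I) = 2 * Real.pi * Complex.I := by
      push_cast
      field_simp
    rw [this, Complex.exp_two_pi_mul_I]
  have hζ1 : ζ ≠ 1 := by
    intro hcon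
    rw [hζ, Complex.exp_eq_one_iff] at hcon
    obtain ⟨k, hk⟩ := hcon
    have hIne : (Complex.I : ℂ) ≠ 0 := Complex.I_ne_zero
    have hk' : ((2 * Real.pi / n : ℝ) : ℂ) = (k : ℂ) * (2 * Real.pi) := by
      have : ((2 * Real.pi / n : ℝ) : ℂ) * Complex.I = ((k : ℂ) * (2 * Real.pi)) * Complex.I := by
        rw [hk]; ring
      exact mul_right_cancel₀ hIne this
    have hkr : (2 * Real.pi / n : ℝ) = (k : ℝ) * (2 * Real.pi) := by
      have := congrArg Complex.re hk'
      push_cast at this ⊢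
      simpa using this
    have hπ := Real.pi_pos
    have hn2' : (2 : ℝ) ≤ (n : ℝ) := by exact_mod_cast hn2
    have hklt : (k : ℝ) * (2 * Real.pi) < 2 * Real.pi := by
      rw [← hkr]
      rw [div_lt_iff₀ (by linarith)]
      nlinarith
    have hkgt : 0 < (k : ℝ) * (2 * Real.pi) := by
      rw [← hkr]; positivity
    have hk1 : (k : ℝ) < 1 := by nlinarith
    have hk0 : 0 < (k : ℝ) := by nlinarith
    have : (0 : ℤ) < k := by exact_mod_cast hk0
    have : (1 : ℤ) ≤ k := this
    have : (1 : ℝ) ≤ (k : ℝ) := by exact_mod_cast this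
    linarith
  have hζabs : ‖ζ‖ = 1 := Complex.norm_exp_ofReal_mul_I _
  -- pick t = δ/2 and two preimages
  set t : ℂ := ((δ / 2 : ℝ) : ℂ) with ht
  have htne : t ≠ 0 := by
    simp only [ht, Ne, Complex.ofReal_eq_zero]
    intro hcon; linarith
  have htmem : t ∈ ball (0:ℂ) δ := by
    simp only [mem_ball, dist_zero_right, ht, Complex.norm_real, Real.norm_eq_abs]
    rw [abs_of_pos (by linarith)]
    linarith
  have hζtmem : ζ * t ∈ ball (0:ℂ) δ := by
    simp only [mem_ball, dist_zero_right] at htmem ⊢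
    rw [norm_mul]
    calc ‖ζ‖ * ‖t‖ = ‖t‖ := by rw [hζabs, one_mul]
    _ < δ := htmem
  obtain ⟨z₁, hz₁, hhz₁⟩ := hδ htmem
  obtain ⟨z₂, hz₂, hhz₂⟩ := hδ hζtmem
  have hz₁R : z₁ ∈ ball (0:ℂ) R' := (hρ z₁ hz₁).2.2
  have hz₂R : z₂ ∈ ball (0:ℂ) R' := (hρ z₂ hz₂).2.2
  have hfz : f z₁ = f z₂ := by
    rw [hpow z₁ hz₁, hpow z₂ hz₂, hhz₁, hhz₂, mul_pow, hζn, one_mul]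
  have : z₁ = z₂ := hinj hz₁R hz₂R hfz
  rw [this, hhz₂] at hhz₁
  have hzero : (ζ - 1) * t = 0 := by linear_combination hhz₁
  rcases mul_eq_zero.mp hzero with h | h
  · exact hζ1 (sub_eq_zero.mp h)
  · exact htne h

/-- Stability of univalence under perturbation: if `(a, z) ↦ F a z` is entire in both
variables, `F a 0 = 0` for all `a`, and `F a₀` is injective on `D(0, R')`, then there are
`R > 0` and `ε > 0` such that `F a` is injective on `D(0, R)` for all `|a - a₀| < ε`. -/
theorem univalence_stability (F : ℂ → ℂ → ℂ)
    (hF : AnalyticOn ℂ (fun p : ℂ × ℂ => F p.1 p.2) Set.univ)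
    (hF0 : ∀ a, F a 0 = 0) (a₀ : ℂ) (R' : ℝ) (hR' : 0 < R')
    (hinj : Set.InjOn (F a₀) (ball 0 R')) :
    ∃ R > (0 : ℝ), ∃ ε > (0 : ℝ), ∀ a : ℂ, ‖a - a₀‖ < ε →
      Set.InjOn (F a) (ball 0 R) := by
  set u : ℂ × ℂ → ℂ := fun p => F p.1 p.2 with hu
  have huN : AnalyticOnNhd ℂ u Set.univ :=
    (isOpen_univ.analyticOn_iff_analyticOnNhd).mp hF
  -- slice derivative
  have hder : ∀ a z : ℂ, HasDerivAt (F a) (fderiv ℂ u (a, z) ((0 : ℂ), (1 : ℂ))) z := by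
    intro a z
    have h1 : HasFDerivAt u (fderiv ℂ u (a, z)) (a, z) :=
      ((huN (a, z) trivial).differentiableAt).hasFDerivAt
    have h2 : HasDerivAt (fun z : ℂ => (a, z)) ((0 : ℂ), (1 : ℂ)) z :=
      (hasDerivAt_const z a).prodMk (hasDerivAt_id z)
    exact h1.comp_hasDerivAt z h2
  set φ : ℂ × ℂ → ℂ := fun p => fderiv ℂ u p ((0 : ℂ), (1 : ℂ)) with hφ
  have hφcont : Continuous φ := by
    have h1 : Continuous (fderiv ℂ u) := by
      rw [← continuousOn_univ]
      exact (huN.fderiv).continuousOn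
    exact h1.clm_apply continuous_const
  set c : ℂ := φ (a₀, 0) with hc
  -- nonvanishing of c
  have hFa₀A : ∀ z, AnalyticAt ℂ (F a₀) z := by
    intro z
    exact (huN (a₀, z) trivial).comp (analyticAt_const.prod (analyticAt_id))
  have hcder : deriv (F a₀) 0 = c := (hder a₀ 0).deriv
  have hc0 : c ≠ 0 := by
    rw [← hcder]
    exact deriv_ne_zero_of_injOn_aux (F a₀) hFa₀A (hF0 a₀) R' hR' hinj
  have hcnorm : 0 < ‖c‖ := norm_pos_iff.mpr hc0
  -- continuity: find δ
  have hcontAt : ContinuousAt φ (a₀, 0) := hφcont.continuousAt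
  obtain ⟨δ, hδ0, hδ⟩ := Metric.continuousAt_iff.mp hcontAt (‖c‖ / 2) (by linarith)
  refine ⟨δ / 2, by linarith, δ / 2, by linarith, ?_⟩
  intro a ha x hx y hy hxy
  simp only [mem_ball, dist_zero_right] at hx hy
  -- bound on derivative on the small ball
  have hbound : ∀ z ∈ ball (0:ℂ) (δ / 2), ‖φ (a, z) - c‖ ≤ ‖c‖ / 2 := by
    intro z hz
    simp only [mem_ball, dist_zero_right] at hz
    have hdist : dist (a, z) (a₀, (0:ℂ)) < δ := by
      rw [Prod.dist_eq]
      apply max_lt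
      · rw [dist_eq_norm]; linarith
      · rw [dist_zero_right]; linarith
    have := hδ hdist
    rw [dist_eq_norm] at this
    linarith
  -- mean value estimate for q z = F a z - c * z
  set q : ℂ → ℂ := fun z => F a z - c * z with hq
  have hqd : ∀ z : ℂ, HasDerivAt q (φ (a, z) - c) z := by
    intro z
    have h1 : HasDerivAt (fun z : ℂ => c * z) (c * 1) z := (hasDerivAt_id z).const_mul c
    have := (hder a z).sub h1; simp only [mul_one] at this; exact this
  have hmvt := Convex.norm_image_sub_le_of_norm_hasDerivWithin_le
    (f := q) (f' := fun z => φ (a, z) - c) (s := ball (0:ℂ) (δ / 2)) (C := ‖c‖ / 2)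
    (fun z hz => (hqd z).hasDerivWithinAt) hbound (convex_ball 0 (δ / 2))
    (mem_ball.mpr (by simpa using hx)) (mem_ball.mpr (by simpa using hy))
  have hqdiff : q y - q x = c * x - c * y := by
    simp only [hq]
    rw [hxy]; ring
  rw [hqdiff] at hmvt
  have : ‖c * x - c * y‖ = ‖c‖ * ‖y - x‖ := by
    rw [← norm_neg, show -(c * x - c * y) = c * (y - x) by ring, norm_mul]
  rw [this] at hmvt
  have hyx : ‖y - x‖ ≤ 0 := by nlinarith
  have : y - x = 0 := norm_le_zero_iff.mp hyx
  exact (sub_eq_zero.mp this).symm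
end
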